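/- arXiv:1603.06944 — 2 statements merged into one kernel-verified Lean document; each statement's English description precedes it below -/
import Mathlib

section
/- Particle-hole symmetry of the symmetrized unitary: let d, n ≥ 1, let H : (Fin d → ℝ) → ℝ → Matrix n n ℂ be continuous with each H(k,t) Hermitian, and let P be an n×n unitary matrix such that P·H(k,t)·P⁻¹ = -(H(-k,t))* for all k and t. Let U(k,t) be the time-evolution operator of H, and define the symmetrized unitary U_S(k,t) = U(k,(1+t)/2) · (U(k,(1-t)/2))ᴴ. Then P·U_S(k,t)·P⁻¹ = (U_S(-k,t))* for all k and t. -/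
open Matrix

attribute [local instance] Matrix.normedAddCommGroup Matrix.normedSpace

noncomputable def mulCLM (n : ℕ) :
    Matrix (Fin n) (Fin n) ℂ →L[ℝ] Matrix (Fin n) (Fin n) ℂ →L[ℝ] Matrix (Fin n) (Fin n) ℂ :=
  LinearMap.toContinuousLinearMap
  { toFun := fun A => LinearMap.toContinuousLinearMap
      { toFun := fun B => A * B
        map_add' := fun B C => mul_add A B C
        map_smul' := fun c B => mul_smul_comm c A B }
    map_add' := fun A B => by ext C : 1; simp [add_mul]
    map_smul' := fun c A => by ext B : 1; simp [smul_mul_assoc] }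

@[simp] lemma mulCLM_apply {n : ℕ} (A B : Matrix (Fin n) (Fin n) ℂ) :
    mulCLM n A B = A * B := rfl

noncomputable def conjCLM (n : ℕ) :
    Matrix (Fin n) (Fin n) ℂ →L[ℝ] Matrix (Fin n) (Fin n) ℂ :=
  LinearMap.toContinuousLinearMap
  { toFun := fun A => A.map (starRingEnd ℂ)
    map_add' := fun A B => by ext i j; simp
    map_smul' := fun c A => by
      ext i j
      simp [Matrix.map_apply, Matrix.smul_apply, Complex.real_smul,
        Complex.conj_ofReal] }

@[simp] lemma conjCLM_apply {n : ℕ} (A : Matrix (Fin n) (Fin n) ℂ) :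
    conjCLM n A = A.map (starRingEnd ℂ) := rfl

noncomputable def ctCLM (n : ℕ) :
    Matrix (Fin n) (Fin n) ℂ →L[ℝ] Matrix (Fin n) (Fin n) ℂ :=
  LinearMap.toContinuousLinearMap
  { toFun := fun A => Aᴴ
    map_add' := fun A B => conjTranspose_add A B
    map_smul' := fun c A => by
      ext i j
      simp [Matrix.conjTranspose_apply, Matrix.smul_apply, Complex.real_smul,
        Complex.conj_ofReal] }

@[simp] lemma ctCLM_apply {n : ℕ} (A : Matrix (Fin n) (Fin n) ℂ) :
    ctCLM n A = Aᴴ := rfl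

theorem hasDerivAt_matrix_mul {n : ℕ} {f g : ℝ → Matrix (Fin n) (Fin n) ℂ}
    {f' g' : Matrix (Fin n) (Fin n) ℂ} {t : ℝ}
    (hf : HasDerivAt f f' t) (hg : HasDerivAt g g' t) :
    HasDerivAt (fun s => f s * g s) (f' * g t + f t * g') t := by
  letI : NormedRing (Matrix (Fin n) (Fin n) ℂ) := Matrix.linftyOpNormedRing
  letI : NormedAlgebra ℝ (Matrix (Fin n) (Fin n) ℂ) := Matrix.linftyOpNormedAlgebra
  have h := (show HasDerivAt f f' t by exact hf).mul (show HasDerivAt g g' t by exact hg)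
  exact h

theorem hasDerivAt_conj {n : ℕ} {f : ℝ → Matrix (Fin n) (Fin n) ℂ}
    {f' : Matrix (Fin n) (Fin n) ℂ} {t : ℝ} (hf : HasDerivAt f f' t) :
    HasDerivAt (fun s => (f s).map (starRingEnd ℂ)) (f'.map (starRingEnd ℂ)) t := by
  have h := (conjCLM n).hasFDerivAt.comp_hasDerivAt t (by exact hf)
  exact h

theorem hasDerivAt_ct {n : ℕ} {f : ℝ → Matrix (Fin n) (Fin n) ℂ}
    {f' : Matrix (Fin n) (Fin n) ℂ} {t : ℝ} (hf : HasDerivAt f f' t) :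
    HasDerivAt (fun s => (f s)ᴴ) (f'ᴴ) t := by
  have h := (ctCLM n).hasFDerivAt.comp_hasDerivAt t (by exact hf)
  exact h

theorem const_of_hasDerivAt_zero {n : ℕ} {f : ℝ → Matrix (Fin n) (Fin n) ℂ}
    (hf : ∀ t, HasDerivAt f 0 t) (t : ℝ) : f t = f 0 :=
  is_const_of_deriv_eq_zero (fun s => (hf s).differentiableAt)
    (fun s => (hf s).deriv) t 0

/-- particle-hole symmetry of the symmetrized unitary
`U_S(k,t) = U(k,(1+t)/2) (U(k,(1-t)/2))ᴴ`: it satisfies `P U_S(k,t) P⁻¹ = (U_S(-k,t))*`. -/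
theorem symmetrized_unitary_particle_hole_symmetry {d n : ℕ} (hd : 1 ≤ d) (hn : 1 ≤ n)
    (H : (Fin d → ℝ) → ℝ → Matrix (Fin n) (Fin n) ℂ)
    (hHcont : Continuous fun p : (Fin d → ℝ) × ℝ => H p.1 p.2)
    (hHherm : ∀ k t, (H k t).IsHermitian)
    (P : Matrix (Fin n) (Fin n) ℂ) (hP : P ∈ Matrix.unitaryGroup (Fin n) ℂ)
    (hPH : ∀ k t, P * H k t * P⁻¹ = -((H (-k) t).map (starRingEnd ℂ)))
    (U : (Fin d → ℝ) → ℝ → Matrix (Fin n) (Fin n) ℂ)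
    (hU0 : ∀ k, U k 0 = 1)
    (hUde : ∀ k t, HasDerivAt (U k) ((-Complex.I) • (H k t * U k t)) t)
    (US : (Fin d → ℝ) → ℝ → Matrix (Fin n) (Fin n) ℂ)
    (hUS : ∀ k t, US k t = U k ((1 + t) / 2) * (U k ((1 - t) / 2))ᴴ) :
    ∀ k t, P * US k t * P⁻¹ = (US (-k) t).map (starRingEnd ℂ) := by
  have hmapsmul : ∀ (c : ℂ) (A : Matrix (Fin n) (Fin n) ℂ),
      (c • A).map (starRingEnd ℂ) = (starRingEnd ℂ c) • A.map (starRingEnd ℂ) := by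
    intro c A; ext i j
    simp [Matrix.map_apply, Matrix.smul_apply, smul_eq_mul, _root_.map_mul]
  have hmapct : ∀ A : Matrix (Fin n) (Fin n) ℂ,
      (A.map (starRingEnd ℂ))ᴴ = (Aᴴ).map (starRingEnd ℂ) := by
    intro A; ext i j
    rfl
  have hPinv : P⁻¹ = Pᴴ := by
    rw [← Matrix.star_eq_conjTranspose]
    exact Matrix.inv_eq_left_inv hP.1
  have hPiP : P⁻¹ * P = 1 := by
    rw [hPinv, ← Matrix.star_eq_conjTranspose]; exact hP.1
  have hPPi : P * P⁻¹ = 1 := by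
    rw [hPinv, ← Matrix.star_eq_conjTranspose]; exact hP.2
  intro k t
  set B : ℝ → Matrix (Fin n) (Fin n) ℂ :=
    fun s => (H (-k) s).map (starRingEnd ℂ) with hBdef
  have hBherm : ∀ s, (B s)ᴴ = B s := by
    intro s
    show ((H (-k) s).map (starRingEnd ℂ))ᴴ = (H (-k) s).map (starRingEnd ℂ)
    rw [hmapct, (hHherm (-k) s).eq]
  set V : ℝ → Matrix (Fin n) (Fin n) ℂ := fun s => P * U k s * P⁻¹ with hVdef
  set W : ℝ → Matrix (Fin n) (Fin n) ℂ :=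
    fun s => (U (-k) s).map (starRingEnd ℂ) with hWdef
  have hW0 : W 0 = 1 := by
    rw [hWdef]; simp only [hU0]
    ext i j
    simp [Matrix.map_apply, Matrix.one_apply, apply_ite]
  have hV0 : V 0 = 1 := by rw [hVdef]; simp only [hU0, mul_one, hPPi]
  have hVd : ∀ s, HasDerivAt V (Complex.I • (B s * V s)) s := by
    intro s
    have h1 := hasDerivAt_matrix_mul
      (hasDerivAt_matrix_mul (hasDerivAt_const s P) (hUde k s))
      (hasDerivAt_const s (P⁻¹))
    have assoc1 : P * H k s * P⁻¹ * (P * U k s * P⁻¹) = P * (H k s * U k s) * P⁻¹ := by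
      simp only [mul_assoc]
      rw [← mul_assoc P⁻¹ P, hPiP, one_mul]
    have key : P * ((-Complex.I) • (H k s * U k s)) * P⁻¹ = Complex.I • (B s * V s) := by
      rw [mul_smul_comm, smul_mul_assoc, ← assoc1, hPH k s]
      simp only [hVdef, neg_mul, smul_neg, neg_smul, neg_neg]
      rfl
    convert h1 using 1
    rw [zero_mul, zero_add, mul_zero, add_zero, key]
  have hWd : ∀ s, HasDerivAt W (Complex.I • (B s * W s)) s := by
    intro s
    have h1 := hasDerivAt_conj (hUde (-k) s)
    convert h1 using 1
    rw [hmapsmul, Matrix.map_mul]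
    simp only [map_neg, Complex.conj_I, neg_neg]
    rfl
  have hct : ∀ s, (Complex.I • (B s * W s))ᴴ = (-Complex.I) • ((W s)ᴴ * B s) := by
    intro s
    rw [Matrix.conjTranspose_smul, Matrix.conjTranspose_mul, hBherm]
    congr 1
    exact Complex.conj_I
  have hWu : ∀ s, (W s)ᴴ * W s = 1 := by
    have hconst : ∀ s, HasDerivAt (fun r => (W r)ᴴ * W r) 0 s := by
      intro s
      have h := hasDerivAt_matrix_mul (hasDerivAt_ct (hWd s)) (hWd s)
      convert h using 1
      rw [hct]
      rw [smul_mul_assoc, mul_smul_comm, mul_assoc, neg_smul, neg_add_cancel]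
    intro s
    have h := const_of_hasDerivAt_zero hconst s
    rw [h, hW0]
    simp
  have hWV : ∀ s, (W s)ᴴ * V s = 1 := by
    have hconst : ∀ s, HasDerivAt (fun r => (W r)ᴴ * V r) 0 s := by
      intro s
      have h := hasDerivAt_matrix_mul (hasDerivAt_ct (hWd s)) (hVd s)
      convert h using 1
      rw [hct]
      rw [smul_mul_assoc, mul_smul_comm, mul_assoc, neg_smul, neg_add_cancel]
    intro s
    have h := const_of_hasDerivAt_zero hconst s
    rw [h, hW0, hV0]
    simp
  have key : ∀ s, P * U k s * P⁻¹ = (U (-k) s).map (starRingEnd ℂ) := by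
    intro s
    have h2 : W s * (W s)ᴴ = 1 := mul_eq_one_comm.mp (hWu s)
    calc P * U k s * P⁻¹ = V s := rfl
      _ = (W s * (W s)ᴴ) * V s := by rw [h2, one_mul]
      _ = W s * ((W s)ᴴ * V s) := by rw [mul_assoc]
      _ = W s := by rw [hWV s, mul_one]
  have keyct : ∀ s, P * (U k s)ᴴ * P⁻¹ = ((U (-k) s)ᴴ).map (starRingEnd ℂ) := by
    intro s
    have h2 := congrArg Matrix.conjTranspose (key s)
    rw [Matrix.conjTranspose_mul, Matrix.conjTranspose_mul, hmapct] at h2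
    rw [← hPinv] at h2
    have h3 : (P⁻¹)ᴴ = P := by rw [hPinv, Matrix.conjTranspose_conjTranspose]
    rw [h3] at h2
    rw [mul_assoc, h2]
  rw [hUS k t, hUS (-k) t]
  calc P * (U k ((1 + t) / 2) * (U k ((1 - t) / 2))ᴴ) * P⁻¹
      = (P * U k ((1 + t) / 2) * P⁻¹) * (P * (U k ((1 - t) / 2))ᴴ * P⁻¹) := by
        simp only [mul_assoc]
        rw [← mul_assoc P⁻¹ P, hPiP, one_mul]
    _ = (U (-k) ((1 + t) / 2)).map (starRingEnd ℂ) *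
        ((U (-k) ((1 - t) / 2))ᴴ).map (starRingEnd ℂ) := by
        rw [key, keyct]
    _ = (U (-k) ((1 + t) / 2) * (U (-k) ((1 - t) / 2))ᴴ).map (starRingEnd ℂ) := by
        rw [Matrix.map_mul]
end

section
/- Time-reversal symmetry of the symmetrized unitary: let d, n ≥ 1, let H : (Fin d → ℝ) → ℝ → Matrix n n ℂ be continuous with each H(k,t) Hermitian, and let θ be an n×n unitary matrix such that θ·H(k,t)·θ⁻¹ = (H(-k,1-t))* for all k and t. Let U(k,t) be the time-evolution operator of H, and define the symmetrized unitary U_S(k,t) = U(k,(1+t)/2) · (U(k,(1-t)/2))ᴴ. Then θ·U_S(k,t)·θ⁻¹ = (U_S(-k,t))ᵀ for all k and t, where Mᵀ denotes the transpose (equivalently, the entrywise complex conjugate of the conjugate transpose, U_S^{†*}). -/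
open Matrix

attribute [local instance] Matrix.normedAddCommGroup Matrix.normedSpace

variable {n : ℕ}

private lemma entry_deriv' {f : ℝ → Matrix (Fin n) (Fin n) ℂ} {f' : Matrix (Fin n) (Fin n) ℂ}
    {t : ℝ} (h : HasDerivAt f f' t) (i j : Fin n) :
    HasDerivAt (fun s => f s i j) (f' i j) t :=
  hasDerivAt_pi.mp (hasDerivAt_pi.mp h i) j

private lemma matMul' {f g : ℝ → Matrix (Fin n) (Fin n) ℂ} {f' g' : Matrix (Fin n) (Fin n) ℂ}
    {t : ℝ} (hf : HasDerivAt f f' t) (hg : HasDerivAt g g' t) :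
    HasDerivAt (fun s => f s * g s) (f' * g t + f t * g') t := by
  refine hasDerivAt_pi.mpr fun i => ?_
  refine hasDerivAt_pi.mpr fun j => ?_
  simp only [Matrix.mul_apply, Matrix.add_apply]
  rw [← Finset.sum_add_distrib]
  exact HasDerivAt.fun_sum fun l _ => (entry_deriv' hf i l).mul (entry_deriv' hg l j)

private lemma matCT' {f : ℝ → Matrix (Fin n) (Fin n) ℂ} {f' : Matrix (Fin n) (Fin n) ℂ}
    {t : ℝ} (h : HasDerivAt f f' t) :
    HasDerivAt (fun s => (f s)ᴴ) f'ᴴ t := by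
  refine hasDerivAt_pi.mpr fun i => ?_; refine hasDerivAt_pi.mpr fun j => ?_
  simp only [Matrix.conjTranspose_apply]
  exact (entry_deriv' h j i).star

private lemma matMap' {f : ℝ → Matrix (Fin n) (Fin n) ℂ} {f' : Matrix (Fin n) (Fin n) ℂ}
    {t : ℝ} (h : HasDerivAt f f' t) :
    HasDerivAt (fun s => (f s).map (starRingEnd ℂ)) (f'.map (starRingEnd ℂ)) t := by
  refine hasDerivAt_pi.mpr fun i => ?_; refine hasDerivAt_pi.mpr fun j => ?_
  simp only [Matrix.map_apply, starRingEnd_apply]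
  exact (entry_deriv' h i j).star

private lemma const_of_deriv_zero' {f : ℝ → Matrix (Fin n) (Fin n) ℂ}
    (h : ∀ t, HasDerivAt f 0 t) : ∀ t, f t = f 0 := by
  intro t
  apply is_const_of_fderiv_eq_zero (𝕜 := ℝ) (fun s => (h s).differentiableAt)
  intro s
  have h1 := (h s).hasFDerivAt
  have h0 : (ContinuousLinearMap.toSpanSingleton ℝ (0 : Matrix (Fin n) (Fin n) ℂ)) = 0 := by
    ext x; simp
  rw [h0] at h1
  exact h1.fderiv

-- entrywise matrix identities
private lemma hmapCT (M : Matrix (Fin n) (Fin n) ℂ) : (M.map (starRingEnd ℂ))ᴴ = Mᵀ := by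
  ext i j
  simp only [Matrix.conjTranspose_apply, Matrix.map_apply, Matrix.transpose_apply,
    starRingEnd_apply, star_star]

private lemma hCTmap (M : Matrix (Fin n) (Fin n) ℂ) : (Mᴴ).map (starRingEnd ℂ) = Mᵀ := by
  ext i j
  simp only [Matrix.conjTranspose_apply, Matrix.map_apply, Matrix.transpose_apply,
    starRingEnd_apply, star_star]

private lemma hTH (M : Matrix (Fin n) (Fin n) ℂ) : (Mᵀ)ᴴ = M.map (starRingEnd ℂ) := by
  ext i j
  simp only [Matrix.conjTranspose_apply, Matrix.map_apply, Matrix.transpose_apply,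
    starRingEnd_apply]

private lemma hHT (M : Matrix (Fin n) (Fin n) ℂ) : (Mᴴ)ᵀ = M.map (starRingEnd ℂ) := by
  ext i j
  simp only [Matrix.conjTranspose_apply, Matrix.map_apply, Matrix.transpose_apply,
    starRingEnd_apply]

private lemma hmapsmul (c : ℂ) (M : Matrix (Fin n) (Fin n) ℂ) :
    (c • M).map (starRingEnd ℂ) = (starRingEnd ℂ c) • M.map (starRingEnd ℂ) := by
  ext i j
  simp [Matrix.map_apply, Matrix.smul_apply]

private lemma hmapherm {M : Matrix (Fin n) (Fin n) ℂ} (h : M.IsHermitian) :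
    (M.map (starRingEnd ℂ))ᴴ = M.map (starRingEnd ℂ) := by
  rw [hmapCT]
  ext i j
  simp only [Matrix.transpose_apply, Matrix.map_apply, starRingEnd_apply]
  exact (h.apply j i).symm


/-- time-reversal symmetry of the symmetrized unitary
`U_S(k,t) = U(k,(1+t)/2) (U(k,(1-t)/2))ᴴ`: it satisfies `θ U_S(k,t) θ⁻¹ = (U_S(-k,t))ᵀ`. -/
theorem symmetrized_unitary_time_reversal_symmetry {d n : ℕ} (hd : 1 ≤ d) (hn : 1 ≤ n)
    (H : (Fin d → ℝ) → ℝ → Matrix (Fin n) (Fin n) ℂ)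
    (hHcont : Continuous fun p : (Fin d → ℝ) × ℝ => H p.1 p.2)
    (hHherm : ∀ k t, (H k t).IsHermitian)
    (θ : Matrix (Fin n) (Fin n) ℂ) (hθ : θ ∈ Matrix.unitaryGroup (Fin n) ℂ)
    (hθH : ∀ k t, θ * H k t * θ⁻¹ = (H (-k) (1 - t)).map (starRingEnd ℂ))
    (U : (Fin d → ℝ) → ℝ → Matrix (Fin n) (Fin n) ℂ)
    (hU0 : ∀ k, U k 0 = 1)
    (hUde : ∀ k t, HasDerivAt (U k) ((-Complex.I) • (H k t * U k t)) t)
    (US : (Fin d → ℝ) → ℝ → Matrix (Fin n) (Fin n) ℂ)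
    (hUS : ∀ k t, US k t = U k ((1 + t) / 2) * (U k ((1 - t) / 2))ᴴ) :
    ∀ k t, θ * US k t * θ⁻¹ = (US (-k) t)ᵀ := by
  -- θ facts
  have hθ1 : θᴴ * θ = 1 := by
    have := hθ.1
    rwa [Matrix.star_eq_conjTranspose] at this
  have hθ2 : θ * θᴴ = 1 := by
    have := hθ.2
    rwa [Matrix.star_eq_conjTranspose] at this
  have hθinv : θ⁻¹ = θᴴ := Matrix.inv_eq_left_inv hθ1
  have hinvθ : θ⁻¹ * θ = 1 := by rw [hθinv]; exact hθ1
  have hθinv' : θ * θ⁻¹ = 1 := by rw [hθinv]; exact hθ2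
  have hcancel : ∀ X : Matrix (Fin n) (Fin n) ℂ, θ⁻¹ * (θ * X) = X := fun X => by
    rw [← Matrix.mul_assoc, hinvθ, Matrix.one_mul]
  -- unitarity of U
  have hunit : ∀ k s, (U k s)ᴴ * U k s = 1 := by
    intro k'
    have hconst := const_of_deriv_zero' (f := fun s => (U k' s)ᴴ * U k' s) (by
      intro s
      have h1 := hUde k' s
      have h2 := matMul' (matCT' h1) h1
      have hD : ((-Complex.I) • (H k' s * U k' s))ᴴ * U k' s
          + (U k' s)ᴴ * ((-Complex.I) • (H k' s * U k' s)) = 0 := by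
        rw [Matrix.conjTranspose_smul, Matrix.conjTranspose_mul, (hHherm k' s).eq]
        simp [Matrix.smul_mul, Matrix.mul_smul, Matrix.mul_assoc]
      rwa [hD] at h2)
    intro s
    have hc : (U k' s)ᴴ * U k' s = (U k' 0)ᴴ * U k' 0 := hconst s
    rw [hc, hU0 k']
    simp
  have hunit2 : ∀ k s, U k s * (U k s)ᴴ = 1 := fun k' s =>
    mul_eq_one_comm.mp (hunit k' s)
  -- key identity
  have key : ∀ k s, θ * U k s * θ⁻¹
      = (U (-k) (1 - s)).map (starRingEnd ℂ) * (U (-k) 1)ᵀ := by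
    intro k' s₀
    set G : ℝ → Matrix (Fin n) (Fin n) ℂ :=
      fun s => (U (-k') (1 - s)).map (starRingEnd ℂ) with hGdef
    set W : ℝ → Matrix (Fin n) (Fin n) ℂ := fun s => θ * U k' s * θ⁻¹ with hWdef
    have hGd : ∀ s, HasDerivAt G
        ((-Complex.I) • ((H (-k') (1 - s)).map (starRingEnd ℂ) * G s)) s := by
      intro s
      have hin : HasDerivAt (fun s : ℝ => 1 - s) (-1) s := by
        exact (hasDerivAt_id s).const_sub 1
      have hcomp : HasDerivAt (fun s : ℝ => U (-k') (1 - s))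
          ((-1 : ℝ) • ((-Complex.I) • (H (-k') (1 - s) * U (-k') (1 - s)))) s := by
        exact (hUde (-k') (1 - s)).scomp s hin
      have hsc : ((-1 : ℝ) • ((-Complex.I) • (H (-k') (1 - s) * U (-k') (1 - s))))
          = Complex.I • (H (-k') (1 - s) * U (-k') (1 - s)) := by
        rw [neg_one_smul, neg_smul, neg_neg]
      rw [hsc] at hcomp
      have := matMap' hcomp
      rw [hmapsmul, Matrix.map_mul] at this
      simpa [hGdef, Complex.conj_I] using this
    have hWd : ∀ s, HasDerivAt W
        ((-Complex.I) • ((H (-k') (1 - s)).map (starRingEnd ℂ) * W s)) s := by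
      intro s
      have h1 := matMul' (matMul' (hasDerivAt_const s θ) (hUde k' s)) (hasDerivAt_const s θ⁻¹)
      have hval : (0 * U k' s + θ * ((-Complex.I) • (H k' s * U k' s))) * θ⁻¹
            + θ * U k' s * 0
          = (-Complex.I) • ((H (-k') (1 - s)).map (starRingEnd ℂ) * W s) := by
        rw [← hθH k' s]
        simp only [Matrix.zero_mul, Matrix.mul_zero, zero_add, add_zero, hWdef]
        rw [Matrix.mul_smul, Matrix.smul_mul]
        congr 1
        simp [Matrix.mul_assoc, hcancel]
      rwa [hval] at h1
    have hF := const_of_deriv_zero' (f := fun s => (G s)ᴴ * W s) (by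
      intro s
      have h2 := matMul' (matCT' (hGd s)) (hWd s)
      have hA := hmapherm (hHherm (-k') (1 - s))
      have hD : ((-Complex.I) • ((H (-k') (1 - s)).map (starRingEnd ℂ) * G s))ᴴ * W s
          + (G s)ᴴ * ((-Complex.I) • ((H (-k') (1 - s)).map (starRingEnd ℂ) * W s)) = 0 := by
        rw [Matrix.conjTranspose_smul, Matrix.conjTranspose_mul, hA]
        simp [Matrix.smul_mul, Matrix.mul_smul, Matrix.mul_assoc]
      rwa [hD] at h2)
    have hF0 : (G 0)ᴴ * W 0 = (U (-k') 1)ᵀ := by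
      simp only [hGdef, hWdef, sub_zero, hU0 k', Matrix.mul_one, hθinv']
      rw [hmapCT]
    have hFs : (G s₀)ᴴ * W s₀ = (U (-k') 1)ᵀ := by
      have hc : (G s₀)ᴴ * W s₀ = (G 0)ᴴ * W 0 := hF s₀
      rw [hc, hF0]
    have hGG : G s₀ * (G s₀)ᴴ = 1 := by
      rw [hmapCT, hGdef]
      have : (U (-k') (1 - s₀))ᵀ = ((U (-k') (1 - s₀))ᴴ).map (starRingEnd ℂ) :=
        (hCTmap _).symm
      rw [this, ← Matrix.map_mul, hunit2 (-k') (1 - s₀)]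
      exact Matrix.map_one _ (map_zero _) (map_one _)
    calc θ * U k' s₀ * θ⁻¹ = W s₀ := rfl
      _ = (G s₀ * (G s₀)ᴴ) * W s₀ := by rw [hGG, Matrix.one_mul]
      _ = G s₀ * ((G s₀)ᴴ * W s₀) := by rw [Matrix.mul_assoc]
      _ = G s₀ * (U (-k') 1)ᵀ := by rw [hFs]
  -- final assembly
  intro k t
  rw [hUS k t, hUS (-k) t]
  have hab : (1 : ℝ) - (1 + t) / 2 = (1 - t) / 2 := by ring
  have hba : (1 : ℝ) - (1 - t) / 2 = (1 + t) / 2 := by ring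
  have e1 : θ * U k ((1 + t) / 2) * θ⁻¹
      = (U (-k) ((1 - t) / 2)).map (starRingEnd ℂ) * (U (-k) 1)ᵀ := by
    have := key k ((1 + t) / 2); rwa [hab] at this
  have e2 : θ * U k ((1 - t) / 2) * θ⁻¹
      = (U (-k) ((1 + t) / 2)).map (starRingEnd ℂ) * (U (-k) 1)ᵀ := by
    have := key k ((1 - t) / 2); rwa [hba] at this
  have hcancel2 : ∀ X : Matrix (Fin n) (Fin n) ℂ, θᴴ * (θ * X) = X := fun X => by
    rw [← Matrix.mul_assoc, hθ1, Matrix.one_mul]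
  have expand : θ * (U k ((1 + t) / 2) * (U k ((1 - t) / 2))ᴴ) * θ⁻¹
      = (θ * U k ((1 + t) / 2) * θ⁻¹) * (θ * U k ((1 - t) / 2) * θ⁻¹)ᴴ := by
    rw [hθinv]
    simp [Matrix.conjTranspose_mul, Matrix.conjTranspose_conjTranspose, Matrix.mul_assoc, hcancel2]
  rw [expand, e1, e2]
  -- now pure matrix algebra
  have hCtC : (U (-k) 1)ᵀ * (U (-k) 1).map (starRingEnd ℂ) = 1 := by
    have : (U (-k) 1)ᵀ = ((U (-k) 1)ᴴ).map (starRingEnd ℂ) := (hCTmap _).symm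
    rw [this, ← Matrix.map_mul, hunit (-k) 1]
    exact Matrix.map_one _ (map_zero _) (map_one _)
  rw [Matrix.conjTranspose_mul, hmapCT, Matrix.transpose_mul, hTH, hHT]
  rw [Matrix.mul_assoc, ← Matrix.mul_assoc ((U (-k) 1)ᵀ), hCtC, Matrix.one_mul]
end
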